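/- Fix ω₀ > 0 and complex numbers L_a, G_b with |G_b| = 1, G_a = 1. For ρ ∈ [0,1] let L(ρ) = L_a·((1−ρ) + ρ·G_b) and assume 1 + L(ρ) ≠ 0 for all ρ ∈ [0,1]. Define k₀(ρ) = |(1−ρ)·L_a/(1+L(ρ))|. Then the derivative of k₀ at ρ = 1 equals −|L_a/(1+L(1))|; in particular this derivative does not depend on the phase of G_b. -/

import Mathlib

open Complex

/-- Common slope at ρ = 1: the one-sided derivative of the cost
`k₀(ρ) = |(1-ρ)·L_a/(1+L(ρ))|` (for ρ ∈ [0,1]) at ρ = 1 equals `-|L_a/(1+L(1))|`, independently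
of the phase of `G_b`. Here `L(ρ) = L_a·((1-ρ)+ρ·G_b)`, so `L(1) = L_a·G_b`. -/
theorem stmt_4 (ω₀ : ℝ) (hω₀ : 0 < ω₀) (La Gb : ℂ) (hGb : ‖Gb‖ = 1)
    (hne : ∀ ρ : ℝ, ρ ∈ Set.Icc (0 : ℝ) 1 → 1 + La * ((1 - (ρ : ℂ)) + (ρ : ℂ) * Gb) ≠ 0) :
    HasDerivWithinAt
      (fun ρ : ℝ => ‖(1 - (ρ : ℂ)) * La / (1 + La * ((1 - (ρ : ℂ)) + (ρ : ℂ) * Gb))‖)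
      (-‖La / (1 + La * Gb)‖) (Set.Iic (1 : ℝ)) 1 := by
  have h1 : (1 : ℂ) + La * Gb ≠ 0 := by
    have := hne 1 (by norm_num)
    simpa using this
  set g : ℝ → ℝ := fun ρ => ‖La / (1 + La * ((1 - (ρ : ℂ)) + (ρ : ℂ) * Gb))‖ with hg
  have hgc : ContinuousAt g 1 := by
    apply continuous_norm.continuousAt.comp
    apply ContinuousAt.div continuousAt_const
    · fun_prop
    · simpa using h1
  rw [hasDerivWithinAt_iff_tendsto_slope]
  have hfg : ∀ᶠ ρ in nhdsWithin (1:ℝ) (Set.Iic 1 \ {1}),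
      slope (fun ρ : ℝ => ‖(1 - (ρ : ℂ)) * La /
        (1 + La * ((1 - (ρ : ℂ)) + (ρ : ℂ) * Gb))‖) 1 ρ = -g ρ := by
    filter_upwards [self_mem_nhdsWithin] with ρ hρ
    obtain ⟨hρ1, hρ2⟩ := hρ
    have hlt : ρ < 1 := lt_of_le_of_ne hρ1 (by simpa using hρ2)
    have hne1 : ρ - 1 ≠ 0 := sub_ne_zero.mpr (by simpa using hρ2)
    have habs : ‖(1 - (ρ : ℂ)) * La /
        (1 + La * ((1 - (ρ : ℂ)) + (ρ : ℂ) * Gb))‖ = (1 - ρ) * g ρ := by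
      rw [mul_div_assoc, norm_mul, hg]
      congr 1
      rw [show ((1 : ℂ) - (ρ : ℂ)) = ((1 - ρ : ℝ) : ℂ) by push_cast; ring,
        Complex.norm_real, Real.norm_eq_abs, _root_.abs_of_nonneg (by linarith)]
    rw [slope_def_field, habs]
    simp only [show ‖(1 - ((1:ℝ) : ℂ)) * La /
        (1 + La * ((1 - ((1:ℝ):ℂ)) + ((1:ℝ):ℂ) * Gb))‖ = 0 by norm_num]
    field_simp
    ring
  refine Filter.Tendsto.congr' (Filter.EventuallyEq.symm hfg) ?_
  have : Filter.Tendsto (fun ρ => -g ρ) (nhdsWithin (1:ℝ) (Set.Iic 1 \ {1})) (nhds (-g 1)) :=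
    (hgc.neg.tendsto).mono_left nhdsWithin_le_nhds
  convert this using 2
  simp [hg]
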